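/- Let $n \geq 3$ and $d_1 \leq \cdots \leq d_n$ be integers with each $d_i \geq 2$ and $d_1 < d_n$. Let $\alpha = \sum_{i=1}^n d_i$, $d = \prod_{i=1}^n d_i$, and suppose $t = d_l$ for some $l < n$. Then $\left(\prod_{i=1}^{n-1}\sum_{j=1}^i d_j\right)(\alpha - 1) \leq n!(d - d_l)$. -/

import Mathlib

theorem stmt9 (n : ℕ) (hn : 3 ≤ n) (d : ℕ → ℤ)
    (hd2 : ∀ i, 1 ≤ i → i ≤ n → 2 ≤ d i)
    (hmono : ∀ i j, 1 ≤ i → i ≤ j → j ≤ n → d i ≤ d j)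
    (hlt : d 1 < d n) (l : ℕ) (hl1 : 1 ≤ l) (hln : l < n) :
    (∏ i ∈ Finset.Icc 1 (n - 1), ∑ j ∈ Finset.Icc 1 i, d j) *
        ((∑ i ∈ Finset.Icc 1 n, d i) - 1) ≤
      (n.factorial : ℤ) * ((∏ i ∈ Finset.Icc 1 n, d i) - d l) := by
  obtain ⟨m, rfl⟩ : ∃ m, n = m + 3 := ⟨n - 3, by omega⟩
  have hnm1 : m + 3 - 1 = m + 2 := by omega
  rw [hnm1]
  set Q : ℤ := ∏ i ∈ Finset.Icc 1 (m + 2), d i with hQdef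
  set P : ℤ := ∏ i ∈ Finset.Icc 1 (m + 2), ∑ j ∈ Finset.Icc 1 i, d j with hPdef
  set α : ℤ := ∑ i ∈ Finset.Icc 1 (m + 3), d i with hαdef
  -- split product
  have hD : (∏ i ∈ Finset.Icc 1 (m + 3), d i) = Q * d (m + 3) :=
    Finset.prod_Icc_succ_top (by omega) d
  rw [hD]
  -- P ≤ (m+2)! * Q
  have hSnn : ∀ i ∈ Finset.Icc 1 (m + 2), 0 ≤ ∑ j ∈ Finset.Icc 1 i, d j := by
    intro i hi
    simp only [Finset.mem_Icc] at hi
    exact Finset.sum_nonneg fun j hj => by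
      simp only [Finset.mem_Icc] at hj
      have := hd2 j hj.1 (by omega); omega
  have hSle : ∀ i ∈ Finset.Icc 1 (m + 2), (∑ j ∈ Finset.Icc 1 i, d j) ≤ (i : ℤ) * d i := by
    intro i hi
    simp only [Finset.mem_Icc] at hi
    calc (∑ j ∈ Finset.Icc 1 i, d j) ≤ ∑ j ∈ Finset.Icc 1 i, d i := by
          refine Finset.sum_le_sum fun j hj => ?_
          simp only [Finset.mem_Icc] at hj
          exact hmono j i hj.1 hj.2 (by omega)
      _ = (i : ℤ) * d i := by
          rw [Finset.sum_const, Nat.card_Icc, nsmul_eq_mul]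
          norm_num
  have hP : P ≤ ((m + 2).factorial : ℤ) * Q := by
    calc P ≤ ∏ i ∈ Finset.Icc 1 (m + 2), (i : ℤ) * d i :=
          Finset.prod_le_prod hSnn hSle
      _ = (∏ i ∈ Finset.Icc 1 (m + 2), (i : ℤ)) * Q := Finset.prod_mul_distrib
      _ = ((m + 2).factorial : ℤ) * Q := by
          congr 1
          rw [← Nat.cast_prod]
          norm_cast
          rw [← Finset.Ico_add_one_right_eq_Icc]
          exact Finset.prod_Ico_id_eq_factorial (m + 2)
  -- α - 1 ≤ (m+3) * d (m+3) - 2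
  have hsingle : d (m + 3) - d 1 ≤ ∑ i ∈ Finset.Icc 1 (m + 3), (d (m + 3) - d i) := by
    refine Finset.single_le_sum (f := fun i => d (m + 3) - d i) ?_ ?_
    · intro i hi
      simp only [Finset.mem_Icc] at hi
      simpa using sub_nonneg.2 (hmono i (m + 3) hi.1 hi.2 le_rfl)
    · simp only [Finset.mem_Icc]; omega
  have hsum_sub : ∑ i ∈ Finset.Icc 1 (m + 3), (d (m + 3) - d i)
      = (m + 3 : ℤ) * d (m + 3) - α := by
    rw [Finset.sum_sub_distrib, Finset.sum_const, Nat.card_Icc, nsmul_eq_mul]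
    push_cast; ring
  have hα : α - 1 ≤ (m + 3 : ℤ) * d (m + 3) - 2 := by
    have h1 : (1 : ℤ) ≤ d (m + 3) - d 1 := by omega
    rw [hsum_sub] at hsingle
    linarith
  have hαpos : 0 ≤ α - 1 := by
    have : (2 : ℤ) * (m + 3) ≤ α := by
      calc (2 : ℤ) * (m + 3) = ∑ _i ∈ Finset.Icc 1 (m + 3), (2 : ℤ) := by
            rw [Finset.sum_const, Nat.card_Icc, nsmul_eq_mul]; push_cast; ring
        _ ≤ α := Finset.sum_le_sum fun i hi => by
            simp only [Finset.mem_Icc] at hi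
            exact hd2 i hi.1 (by omega)
    linarith
  -- Q positivity and lower bound
  have hd2' : ∀ i ∈ Finset.Icc 1 (m + 2), (2 : ℤ) ≤ d i := by
    intro i hi; simp only [Finset.mem_Icc] at hi; exact hd2 i hi.1 (by omega)
  have hQpos : 0 < Q :=
    Finset.prod_pos fun i hi => lt_of_lt_of_le (by norm_num) (hd2' i hi)
  have hlmem : l ∈ Finset.Icc 1 (m + 2) := by simp only [Finset.mem_Icc]; omega
  have hQl : (2 : ℤ) ^ (m + 1) * d l ≤ Q := by
    rw [hQdef, ← Finset.mul_prod_erase _ _ hlmem]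
    have hcard : ((Finset.Icc 1 (m + 2)).erase l).card = m + 1 := by
      rw [Finset.card_erase_of_mem hlmem, Nat.card_Icc]; omega
    have hprod : (2 : ℤ) ^ (m + 1) ≤ ∏ i ∈ (Finset.Icc 1 (m + 2)).erase l, d i := by
      calc (2 : ℤ) ^ (m + 1) = ∏ _i ∈ (Finset.Icc 1 (m + 2)).erase l, (2 : ℤ) := by
            rw [Finset.prod_const, hcard]
        _ ≤ _ := Finset.prod_le_prod (fun i _ => by norm_num)
            (fun i hi => hd2' i (Finset.mem_of_mem_erase hi))
    have hdl : (0 : ℤ) ≤ d l := by have := hd2 l hl1 (by omega); omega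
    calc (2 : ℤ) ^ (m + 1) * d l = d l * 2 ^ (m + 1) := by ring
      _ ≤ d l * ∏ i ∈ (Finset.Icc 1 (m + 2)).erase l, d i :=
          mul_le_mul_of_nonneg_left hprod hdl
  -- n ≤ 2^(n-1)
  have hpow : (m + 3 : ℤ) ≤ 2 ^ (m + 2) := by
    have : m + 2 < 2 ^ (m + 2) := Nat.lt_two_pow_self (n := m + 2)
    have h' : m + 3 ≤ 2 ^ (m + 2) := this
    exact_mod_cast h'
  -- (m+3) * d l ≤ 2 * Q
  have hdl2 : (2 : ℤ) ≤ d l := hd2 l hl1 (by omega)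
  have hkey : (m + 3 : ℤ) * d l ≤ 2 * Q := by
    have h1 : (m + 3 : ℤ) * d l ≤ 2 ^ (m + 2) * d l :=
      mul_le_mul_of_nonneg_right hpow (by linarith)
    have h2 : (2 : ℤ) ^ (m + 2) * d l = 2 * (2 ^ (m + 1) * d l) := by ring
    linarith
  -- factorial relation
  have hfac : ((m + 3).factorial : ℤ) = (m + 3 : ℤ) * ((m + 2).factorial : ℤ) := by
    rw [Nat.factorial_succ]; push_cast; ring
  have hFpos : (0 : ℤ) < ((m + 2).factorial : ℤ) := by positivity
  -- combine
  have hstep : P * (α - 1) ≤ (((m + 2).factorial : ℤ) * Q) * ((m + 3 : ℤ) * d (m + 3) - 2) := by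
    have hPnn : 0 ≤ P := Finset.prod_nonneg hSnn
    exact mul_le_mul hP hα hαpos (by positivity)
  rw [hfac]
  nlinarith [hstep, hkey, hFpos, hQpos]
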